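/- Let n ≥ 1 and let x, y : {1,…,n} → {0,1}. The graph I(x,y) is connected if and only if for every index 1 ≤ i ≤ n, x_i = 0 or y_i = 0. -/
import Mathlib


/-- Vertices of the `Interval` construction: `u i`, `v i`, `a i`, `b i` for
`i ∈ {1, …, n}` (encoded as `Fin n`). -/
inductive IVert (n : ℕ) : Type
  | u : Fin n → IVert n
  | v : Fin n → IVert n
  | a : Fin n → IVert n
  | b : Fin n → IVert n

/-- Edges of `I(x, y)`: `u i ~ a i` and `v i ~ b i`; `v_{i-1} ~ u_i` (consecutive
indices); `a i ~ v i` iff `x i = 0`; `b i ~ u i` and `b i ~ a i` iff `y i = 0`;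
no other edges. -/
def iRel {n : ℕ} (x y : Fin n → Fin 2) : IVert n → IVert n → Prop
  | .u i, .a j => i = j
  | .v i, .b j => i = j
  | .v i, .u k => (k : ℕ) = (i : ℕ) + 1
  | .a i, .v j => i = j ∧ x i = 0
  | .b i, .u j => i = j ∧ y i = 0
  | .b i, .a j => i = j ∧ y i = 0
  | _, _ => False

/-- The `Interval` graph. -/
def IGraph {n : ℕ} (x y : Fin n → Fin 2) : SimpleGraph (IVert n) :=
  SimpleGraph.fromRel (iRel x y)

lemma igraph_adj {n : ℕ} (x y : Fin n → Fin 2) (s t : IVert n) :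
    (IGraph x y).Adj s t ↔ s ≠ t ∧ (iRel x y s t ∨ iRel x y t s) :=
  SimpleGraph.fromRel_adj _ _ _

/-- The cut coloring used to prove the forward direction. -/
def fCol {n : ℕ} (i : Fin n) : IVert n → Prop
  | .u j => (j : ℕ) ≤ (i : ℕ)
  | .v j => (j : ℕ) < (i : ℕ)
  | .a j => (j : ℕ) ≤ (i : ℕ)
  | .b j => (j : ℕ) < (i : ℕ)

lemma irel_col {n : ℕ} (x y : Fin n → Fin 2) (i : Fin n)
    (hx : x i ≠ 0) (hy : y i ≠ 0) :
    ∀ s t, iRel x y s t → (fCol i s ↔ fCol i t) := by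
  have hxne : ∀ j : Fin n, x j = 0 → (j : ℕ) ≠ (i : ℕ) := by
    intro j h0 e
    exact hx (Fin.val_injective e ▸ h0)
  have hyne : ∀ j : Fin n, y j = 0 → (j : ℕ) ≠ (i : ℕ) := by
    intro j h0 e
    exact hy (Fin.val_injective e ▸ h0)
  intro s t h
  cases s <;> cases t <;> simp only [iRel] at h <;>
    first
    | (obtain rfl := h; simp [fCol])
    | (obtain ⟨rfl, h0⟩ := h
       simp only [fCol]
       first
       | omega
       | (have := hxne _ h0; omega)
       | (have := hyne _ h0; omega))
    | (simp only [fCol]; omega)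

theorem stmt_15 {n : ℕ} (hn : 1 ≤ n) (x y : Fin n → Fin 2) :
    (IGraph x y).Connected ↔ ∀ i : Fin n, x i = 0 ∨ y i = 0 := by
  constructor
  · intro hc i
    by_contra hcon
    push_neg at hcon
    obtain ⟨hx, hy⟩ := hcon
    have hreach : ∀ s t : IVert n, (IGraph x y).Reachable s t →
        (fCol i s ↔ fCol i t) := by
      intro s t h
      obtain ⟨p⟩ := h
      induction p with
      | nil => exact Iff.rfl
      | cons hadj p ih =>
          refine Iff.trans ?_ ih
          rw [igraph_adj] at hadj
          rcases hadj.2 with h | h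
          · exact irel_col x y i hx hy _ _ h
          · exact (irel_col x y i hx hy _ _ h).symm
    have := hreach (.u i) (.v i) (hc.preconnected _ _)
    simp only [fCol] at this
    omega
  · intro h
    rw [SimpleGraph.connected_iff]
    refine ⟨?_, ⟨.u ⟨0, hn⟩⟩⟩
    have huv : ∀ i : Fin n, (IGraph x y).Reachable (.u i) (.v i) := by
      intro i
      rcases h i with h0 | h0
      · have h1 : (IGraph x y).Adj (.u i) (.a i) := by
          rw [igraph_adj]
          exact ⟨by simp, Or.inl rfl⟩
        have h2 : (IGraph x y).Adj (.a i) (.v i) := by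
          rw [igraph_adj]
          exact ⟨by simp, Or.inl ⟨rfl, h0⟩⟩
        exact h1.reachable.trans h2.reachable
      · have h1 : (IGraph x y).Adj (.u i) (.b i) := by
          rw [igraph_adj]
          exact ⟨by simp, Or.inr ⟨rfl, h0⟩⟩
        have h2 : (IGraph x y).Adj (.b i) (.v i) := by
          rw [igraph_adj]
          exact ⟨by simp, Or.inr rfl⟩
        exact h1.reachable.trans h2.reachable
    have hu : ∀ (k : ℕ) (hk : k < n),
        (IGraph x y).Reachable (.u ⟨0, hn⟩) (.u ⟨k, hk⟩) := by
      intro k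
      induction k with
      | zero => intro hk; exact SimpleGraph.Reachable.refl _
      | succ m ih =>
          intro hk
          have hm : m < n := Nat.lt_of_succ_lt hk
          have hvu : (IGraph x y).Adj (.v ⟨m, hm⟩) (.u ⟨m + 1, hk⟩) := by
            rw [igraph_adj]
            exact ⟨by simp, Or.inl rfl⟩
          exact ((ih hm).trans (huv ⟨m, hm⟩)).trans hvu.reachable
    have hureach : ∀ i : Fin n, (IGraph x y).Reachable (.u ⟨0, hn⟩) (.u i) := by
      intro i
      exact hu i.1 i.2
    suffices H : ∀ w : IVert n, (IGraph x y).Reachable (.u ⟨0, hn⟩) w by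
      intro s t
      exact (H s).symm.trans (H t)
    intro w
    cases w with
    | u i => exact hureach i
    | v i => exact (hureach i).trans (huv i)
    | a i =>
        have h1 : (IGraph x y).Adj (.u i) (.a i) := by
          rw [igraph_adj]
          exact ⟨by simp, Or.inl rfl⟩
        exact (hureach i).trans h1.reachable
    | b i =>
        have h2 : (IGraph x y).Adj (.v i) (.b i) := by
          rw [igraph_adj]
          exact ⟨by simp, Or.inl rfl⟩
        exact ((hureach i).trans (huv i)).trans h2.reachable
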